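/- Let k ≥ 1 and let A be a family of k-subsets of [2k] with |A| = C(2k - t, k) for some real t ≥ 1 (using the generalized binomial coefficient C(x,k) = x(x-1)···(x-k+1)/k!). Then the upper shadow ∇A = {y ∈ C([2k], k+1) : ∃ x ∈ A, y ⊇ x} satisfies |∇A| ≥ ((t-1)/(k-t+1))·|A| + |A|, i.e., δ(A) := (|∇A| - |A|)/|A| ≥ (t-1)/(k-t+1). -/

import Mathlib

open Finset Finset.UV
open scoped FinsetFamily

noncomputable def rbin (x : ℝ) (j : ℕ) : ℝ := (∏ i ∈ Finset.range j, (x - i)) / j.factorial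

lemma rbin_zero (x : ℝ) : rbin x 0 = 1 := by simp [rbin]

lemma rbin_nonneg {x : ℝ} {j : ℕ} (h : (j : ℝ) - 1 ≤ x) : 0 ≤ rbin x j := by
  apply div_nonneg _ (by positivity)
  apply Finset.prod_nonneg
  intro i hi
  rw [Finset.mem_range] at hi
  have : (i : ℝ) + 1 ≤ j := by exact_mod_cast hi
  linarith

lemma rbin_mono {x y : ℝ} {j : ℕ} (hx : (j : ℝ) - 1 ≤ x) (hxy : x ≤ y) :
    rbin x j ≤ rbin y j := by
  rw [rbin, rbin]
  apply div_le_div_of_nonneg_right ?_ (by positivity)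
  apply Finset.prod_le_prod
  · intro i hi
    rw [Finset.mem_range] at hi
    have : (i : ℝ) + 1 ≤ j := by exact_mod_cast hi
    linarith
  · intro i _
    linarith

lemma prod_self_eq_factorial (j : ℕ) :
    (∏ i ∈ Finset.range j, ((j : ℝ) - i)) = j.factorial := by
  rw [← Finset.prod_range_reflect]
  have : ∀ i ∈ Finset.range j, ((j : ℝ) - (j - 1 - i : ℕ)) = (i + 1 : ℕ) := by
    intro i hi
    rw [Finset.mem_range] at hi
    have h1 : (j - 1 - i : ℕ) = j - 1 - i := rfl
    have : ((j - 1 - i : ℕ) : ℝ) = (j : ℝ) - 1 - i := by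
      have : j - 1 - i + (1 + i) = j := by omega
      have := congrArg (fun m : ℕ => (m : ℝ)) this
      push_cast at this
      linarith
    rw [this]
    push_cast
    ring
  rw [Finset.prod_congr rfl this]
  rw [← Nat.cast_prod]
  norm_cast
  exact Finset.prod_range_add_one_eq_factorial j

lemma rbin_self (j : ℕ) : rbin (j : ℝ) j = 1 := by
  rw [rbin, prod_self_eq_factorial]
  have : (j.factorial : ℝ) ≠ 0 := by positivity
  field_simp

lemma rbin_one_le {x : ℝ} {j : ℕ} (h : (j : ℝ) ≤ x) : 1 ≤ rbin x j := by
  have := rbin_mono (x := (j : ℝ)) (j := j) (by linarith) h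
  rw [rbin_self] at this
  exact this

lemma rbin_succ_eq (x : ℝ) (m : ℕ) :
    rbin x (m + 1) = rbin x m * (x - m) / (m + 1) := by
  rw [rbin, rbin, Finset.prod_range_succ, Nat.factorial_succ, div_mul_eq_mul_div, div_div]
  congr 1
  push_cast
  ring

lemma rbin_pascal (x : ℝ) (m : ℕ) :
    rbin x (m + 1) = rbin (x - 1) (m + 1) + rbin (x - 1) m := by
  rw [rbin, rbin, rbin, Finset.prod_range_succ', Finset.prod_range_succ, Nat.factorial_succ]
  have hP : ∀ i ∈ Finset.range m, (x - (i + 1 : ℕ)) = (x - 1 - i) := by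
    intro i _; push_cast; ring
  rw [Finset.prod_congr rfl hP]
  set P := ∏ i ∈ Finset.range m, (x - 1 - i)
  have h1 : ((m : ℝ) + 1) ≠ 0 := by positivity
  have h2 : (m.factorial : ℝ) ≠ 0 := by positivity
  push_cast
  field_simp
  ring

noncomputable section

open Finset Colex Nat UV
open scoped FinsetFamily

private def famMeasure {n : ℕ} (𝒜 : Finset (Finset (Fin n))) : ℕ :=
  ∑ A ∈ 𝒜, ∑ a ∈ A, 2 ^ (a : ℕ)

attribute [-instance] instDecidableEqFin in
private lemma famMeasure_compression_lt {n : ℕ} {U V : Finset (Fin n)} {hU : U.Nonempty}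
    {hV : V.Nonempty} (h : U.max' hU < V.max' hV) {𝒜 : Finset (Finset (Fin n))}
    (a : 𝓒 U V 𝒜 ≠ 𝒜) : famMeasure (𝓒 U V 𝒜) < famMeasure 𝒜 := by
  rw [compression] at a ⊢
  have q : ∀ Q ∈ {A ∈ 𝒜 | compress U V A ∉ 𝒜}, compress U V Q ≠ Q := by
    simp_rw [Finset.mem_filter]
    intro Q hQ h
    rw [h] at hQ
    exact hQ.2 hQ.1
  have uA : {A ∈ 𝒜 | compress U V A ∈ 𝒜} ∪ {A ∈ 𝒜 | compress U V A ∉ 𝒜} = 𝒜 :=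
    Finset.filter_union_filter_not_eq _ _
  have ne₂ : {A ∈ 𝒜 | compress U V A ∉ 𝒜}.Nonempty := by
    refine Finset.nonempty_iff_ne_empty.2 fun z ↦ a ?_
    rw [Finset.filter_image, z, Finset.image_empty, Finset.union_empty]
    rwa [z, Finset.union_empty] at uA
  rw [famMeasure, famMeasure, Finset.sum_union compress_disjoint]
  conv_rhs => rw [← uA]
  rw [Finset.sum_union (Finset.disjoint_filter_filter_not _ _ _), add_lt_add_iff_left,
    Finset.filter_image, Finset.sum_image compress_injOn]
  refine Finset.sum_lt_sum_of_nonempty ne₂ fun A hA ↦ ?_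
  simp_rw [← Finset.sum_image Fin.val_injective.injOn]
  rw [geomSum_lt_geomSum_iff_toColex_lt_toColex le_rfl,
    toColex_image_lt_toColex_image Fin.val_strictMono]
  exact toColex_compress_lt_toColex h <| q _ hA

attribute [-instance] instDecidableEqFin in
private lemma zero_compress_helper {n : ℕ} [NeZero n] {r : ℕ} (𝒜 : Finset (Finset (Fin n)))
    (h : ∀ s ∈ 𝒜, s.card = r) :
    ∃ ℬ : Finset (Finset (Fin n)), (∂ ℬ).card ≤ (∂ 𝒜).card ∧ 𝒜.card = ℬ.card ∧
      (∀ s ∈ ℬ, s.card = r) ∧ ∀ v : Fin n, IsCompressed {0} {v} ℬ := by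
  by_cases H : ∀ v : Fin n, IsCompressed {0} {v} 𝒜
  · exact ⟨𝒜, le_rfl, rfl, h, H⟩
  · push_neg at H
    obtain ⟨v, hv⟩ := H
    have hv0 : v ≠ 0 := by rintro rfl; exact hv (isCompressed_self _ _)
    have hmax : ({0} : Finset (Fin n)).max' (Finset.singleton_nonempty _) <
        ({v} : Finset (Fin n)).max' (Finset.singleton_nonempty _) := by
      simp only [Finset.max'_singleton]
      exact (Fin.pos_iff_ne_zero' v).2 hv0
    have hm : famMeasure (𝓒 {0} {v} 𝒜) < famMeasure 𝒜 :=
      famMeasure_compression_lt hmax hv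
    have hs : (∂ (𝓒 {0} {v} 𝒜)).card ≤ (∂ 𝒜).card := by
      refine card_shadow_compression_le _ _ ?_
      intro x hx
      refine ⟨v, Finset.mem_singleton_self _, ?_⟩
      rw [Finset.mem_singleton] at hx
      subst hx
      rw [Finset.erase_singleton, Finset.erase_singleton]
      exact isCompressed_self _ _
    have hsz : ∀ s ∈ 𝓒 {0} {v} 𝒜, s.card = r := by
      have := Set.Sized.uvCompression (u := ({0} : Finset (Fin n))) (v := {v})
        (by simp) (fun s hs => h s hs)
      exact fun s hs => this hs
    obtain ⟨ℬ, b1, b2, b3, b4⟩ := zero_compress_helper (𝓒 {0} {v} 𝒜) hsz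
    exact ⟨ℬ, b1.trans hs, (card_compression _ _ _).symm.trans b2, b3, b4⟩
termination_by famMeasure 𝒜

end

attribute [-instance] instDecidableEqFin in
lemma lovasz_shadow : ∀ (k : ℕ), 1 ≤ k → ∀ (m n : ℕ) (𝒜 : Finset (Finset (Fin n))),
    𝒜.card = m → (∀ s ∈ 𝒜, s.card = k) → ∀ x : ℝ, (k : ℝ) ≤ x →
    rbin x k ≤ (𝒜.card : ℝ) → rbin x (k - 1) ≤ ((∂ 𝒜).card : ℝ) := by
  intro k
  induction k using Nat.strong_induction_on with
  | _ k IHk =>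
  intro hk m
  induction m using Nat.strong_induction_on with
  | _ m IHm =>
  intro n 𝒜 hm hsz x hx hcard
  have h1 : (1 : ℝ) ≤ rbin x k := rbin_one_le hx
  have hApos : 0 < 𝒜.card := by
    rcases Nat.eq_zero_or_pos 𝒜.card with h | h
    · rw [h] at hcard; norm_num at hcard; linarith
    · exact h
  have hAne : 𝒜.Nonempty := Finset.card_pos.mp hApos
  rcases eq_or_lt_of_le hk with hk1 | hk2
  · -- k = 1
    obtain ⟨S, hS⟩ := hAne
    have hScard : S.card = 1 := by rw [hsz S hS, ← hk1]
    obtain ⟨a, rfl⟩ := Finset.card_eq_one.mp hScard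
    have hmem : (∅ : Finset (Fin n)) ∈ ∂ 𝒜 := by
      rw [Finset.mem_shadow_iff]
      exact ⟨{a}, hS, a, Finset.mem_singleton_self a, by simp⟩
    have : 1 ≤ (∂ 𝒜).card := Finset.card_pos.mpr ⟨∅, hmem⟩
    have h10 : k - 1 = 0 := by omega
    rw [h10, rbin_zero]
    exact_mod_cast this
  · -- k ≥ 2
    obtain ⟨k', rfl⟩ : ∃ k', k = k' + 2 := ⟨k - 2, by omega⟩
    haveI : NeZero n := by
      obtain ⟨S, hS⟩ := hAne
      have : S.Nonempty := Finset.card_pos.mp (by rw [hsz S hS]; omega)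
      obtain ⟨a, _⟩ := this
      exact ⟨Nat.pos_iff_ne_zero.mp a.pos⟩
    obtain ⟨ℬ, hshad, hcardB, hszB, hcomp⟩ := zero_compress_helper 𝒜 hsz
    set a0 : Fin n := 0 with ha0
    set ℬ₁ : Finset (Finset (Fin n)) :=
      (ℬ.filter (fun S => a0 ∈ S)).image (fun S => S.erase a0) with hℬ₁
    set ℬ₀ : Finset (Finset (Fin n)) := ℬ.filter (fun S => a0 ∉ S) with hℬ₀
    have hB1card : ℬ₁.card = (ℬ.filter (fun S => a0 ∈ S)).card := by
      apply Finset.card_image_of_injOn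
      intro S hS T hT hST
      rw [Finset.mem_coe, Finset.mem_filter] at hS hT
      have := congrArg (insert a0) hST
      rwa [Finset.insert_erase hS.2, Finset.insert_erase hT.2] at this
    have hsplit : ℬ₀.card + ℬ₁.card = ℬ.card := by
      rw [hB1card, hℬ₀, add_comm]
      exact Finset.card_filter_add_card_filter_not _
    have hszB1 : ∀ s ∈ ℬ₁, s.card = k' + 1 := by
      intro s hs
      rw [hℬ₁, Finset.mem_image] at hs
      obtain ⟨S, hS, rfl⟩ := hs
      rw [Finset.mem_filter] at hS
      rw [Finset.card_erase_of_mem hS.2, hszB S hS.1]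
      omega
    have hszB0 : ∀ s ∈ ℬ₀, s.card = k' + 2 := fun s hs =>
      hszB s (Finset.mem_filter.mp hs).1
    have hnotmem1 : ∀ s ∈ ℬ₁, a0 ∉ s := by
      intro s hs
      rw [hℬ₁, Finset.mem_image] at hs
      obtain ⟨S, _, rfl⟩ := hs
      exact Finset.notMem_erase _ _
    -- Claim A : ∂ ℬ₀ ⊆ ℬ₁
    have claimA : ∂ ℬ₀ ⊆ ℬ₁ := by
      intro T hT
      rw [Finset.mem_shadow_iff] at hT
      obtain ⟨S, hS, u, hu, rfl⟩ := hT
      rw [Finset.mem_filter] at hS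
      obtain ⟨hSB, hSa0⟩ := hS
      have hua : u ≠ a0 := fun h => hSa0 (h ▸ hu)
      have hW : UV.compress {a0} {u} S ∈ ℬ := by
        have := UV.compress_mem_compression (u := ({a0} : Finset (Fin n))) (v := {u}) hSB
        rwa [(hcomp u).eq] at this
      have hWeq : UV.compress {a0} {u} S = insert a0 (S.erase u) := by
        rw [UV.compress_of_disjoint_of_le (by simpa using hSa0) (by simpa using hu)]
        ext b
        simp only [Finset.mem_sdiff, Finset.mem_union, Finset.mem_singleton, Finset.mem_insert,
          Finset.mem_erase, Finset.sup_eq_union]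
        constructor
        · rintro ⟨hb1 | hb1, hb2⟩
          · exact Or.inr ⟨hb2, hb1⟩
          · exact Or.inl hb1
        · rintro (rfl | ⟨hb1, hb2⟩)
          · exact ⟨Or.inr rfl, hua ∘ Eq.symm ∘ id⟩
          · exact ⟨Or.inl hb2, hb1⟩
      rw [hWeq] at hW
      rw [hℬ₁, Finset.mem_image]
      refine ⟨insert a0 (S.erase u), Finset.mem_filter.mpr ⟨hW, Finset.mem_insert_self _ _⟩, ?_⟩
      rw [Finset.erase_insert (fun h => hSa0 (Finset.mem_of_mem_erase h))]
    -- Claim B : ℬ₁.card + (∂ ℬ₁).card ≤ (∂ ℬ).card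
    have claimB : ℬ₁.card + (∂ ℬ₁).card ≤ (∂ ℬ).card := by
      have hsub1 : ℬ₁ ⊆ ∂ ℬ := by
        intro T hT
        rw [hℬ₁, Finset.mem_image] at hT
        obtain ⟨S, hS, rfl⟩ := hT
        rw [Finset.mem_filter] at hS
        rw [Finset.mem_shadow_iff]
        exact ⟨S, hS.1, a0, hS.2, rfl⟩
      have hsub2 : (∂ ℬ₁).image (insert a0) ⊆ ∂ ℬ := by
        intro W hW
        rw [Finset.mem_image] at hW
        obtain ⟨W', hW', rfl⟩ := hW
        rw [Finset.mem_shadow_iff] at hW'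
        obtain ⟨T, hT, u, hu, rfl⟩ := hW'
        have hTmem := hT
        rw [hℬ₁, Finset.mem_image] at hTmem
        obtain ⟨S, hS, rfl⟩ := hTmem
        rw [Finset.mem_filter] at hS
        have hu' : u ∈ S := Finset.mem_of_mem_erase hu
        have hua : u ≠ a0 := (Finset.mem_erase.mp hu).1
        have : insert a0 ((S.erase a0).erase u) = S.erase u := by
          rw [Finset.erase_right_comm, Finset.insert_erase]
          exact Finset.mem_erase.mpr ⟨fun h => hua h.symm, hS.2⟩
        rw [this, Finset.mem_shadow_iff]
        exact ⟨S, hS.1, u, hu', rfl⟩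
      have hdisj : Disjoint ℬ₁ ((∂ ℬ₁).image (insert a0)) := by
        rw [Finset.disjoint_left]
        intro s hs hs'
        rw [Finset.mem_image] at hs'
        obtain ⟨W, _, rfl⟩ := hs'
        exact hnotmem1 _ hs (Finset.mem_insert_self _ _)
      have himg : ((∂ ℬ₁).image (insert a0)).card = (∂ ℬ₁).card := by
        apply Finset.card_image_of_injOn
        intro S hS T hT hST
        rw [Finset.mem_coe, Finset.mem_shadow_iff] at hS hT
        obtain ⟨S', hS', uS, huS, rfl⟩ := hS
        obtain ⟨T', hT', uT, huT, rfl⟩ := hT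
        have ha0S : a0 ∉ S'.erase uS := fun h =>
          hnotmem1 _ hS' (Finset.mem_of_mem_erase h)
        have ha0T : a0 ∉ T'.erase uT := fun h =>
          hnotmem1 _ hT' (Finset.mem_of_mem_erase h)
        have := congrArg (fun s => Finset.erase s a0) hST
        simpa [Finset.erase_insert ha0S, Finset.erase_insert ha0T] using this
      calc ℬ₁.card + (∂ ℬ₁).card = (ℬ₁ ∪ (∂ ℬ₁).image (insert a0)).card := by
            rw [Finset.card_union_of_disjoint hdisj, himg]
        _ ≤ (∂ ℬ).card := Finset.card_le_card (Finset.union_subset hsub1 hsub2)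
    -- Claim C : rbin (x-1) (k'+1) ≤ ℬ₁.card
    have claimC : rbin (x - 1) (k' + 1) ≤ (ℬ₁.card : ℝ) := by
      by_contra hc
      push_neg at hc
      have hB1ne : ℬ₁.Nonempty := by
        rw [Finset.nonempty_iff_ne_empty]
        intro hemp
        have hB0emp : ℬ₀ = ∅ := by
          rw [Finset.eq_empty_iff_forall_notMem]
          intro S hS
          have hSne : S.Nonempty := Finset.card_pos.mp (by rw [hszB0 S hS]; omega)
          obtain ⟨u, hu⟩ := hSne
          have : S.erase u ∈ ∂ ℬ₀ := Finset.mem_shadow_iff.mpr ⟨S, hS, u, hu, rfl⟩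
          have := claimA this
          rw [hemp] at this
          exact Finset.notMem_empty _ this
        have : ℬ.card = 0 := by
          rw [← hsplit, hB0emp, hemp]; simp
        omega
      have hB1pos : 0 < ℬ₁.card := Finset.card_pos.mpr hB1ne
      have h0lt : ℬ₀.card < m := by omega
      have hkey : rbin (x - 1) (k' + 2) < (ℬ₀.card : ℝ) := by
        have hp : rbin x (k' + 2) = rbin (x - 1) (k' + 2) + rbin (x - 1) (k' + 1) :=
          rbin_pascal x (k' + 1)
        have hEq : (ℬ₀.card : ℝ) = (ℬ.card : ℝ) - ℬ₁.card := by
          rw [← hsplit]; push_cast; ring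
        rw [hEq, ← hcardB]
        linarith
      set y : ℝ := max (x - 1) ((k' + 2 : ℕ) : ℝ) with hy
      have hy1 : ((k' + 2 : ℕ) : ℝ) ≤ y := le_max_right _ _
      have hy2 : rbin y (k' + 2) ≤ (ℬ₀.card : ℝ) := by
        rcases le_total (x - 1) ((k' + 2 : ℕ) : ℝ) with hcase | hcase
        · have hyk : y = ((k' + 2 : ℕ) : ℝ) := max_eq_right hcase
          rw [hyk, rbin_self]
          have h0 : (0 : ℝ) ≤ rbin (x - 1) (k' + 2) := by
            apply rbin_nonneg
            push_cast at hx ⊢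
            linarith
          have : (0 : ℝ) < (ℬ₀.card : ℝ) := lt_of_le_of_lt h0 hkey
          have : 0 < ℬ₀.card := by exact_mod_cast this
          exact_mod_cast this
        · have hyk : y = x - 1 := max_eq_left hcase
          rw [hyk]
          exact hkey.le
      have hIH := IHm ℬ₀.card h0lt n ℬ₀ rfl hszB0 y hy1 hy2
      have hmono : rbin (x - 1) ((k' + 2) - 1) ≤ rbin y ((k' + 2) - 1) := by
        apply rbin_mono _ (le_max_left _ _)
        push_cast at hx ⊢
        linarith
      have hle : ((∂ ℬ₀).card : ℝ) ≤ (ℬ₁.card : ℝ) := by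
        exact_mod_cast Finset.card_le_card claimA
      have e : k' + 2 - 1 = k' + 1 := rfl
      rw [e] at hIH hmono
      linarith
    -- Claim D : IH on k applied to ℬ₁
    have claimD : rbin (x - 1) k' ≤ ((∂ ℬ₁).card : ℝ) := by
      have := IHk (k' + 1) (by omega) (by omega) ℬ₁.card n ℬ₁ rfl hszB1 (x - 1)
        (by push_cast at hx ⊢; linarith) claimC
      simpa using this
    -- Combine
    have hpas : rbin x (k' + 1) = rbin (x - 1) (k' + 1) + rbin (x - 1) k' :=
      rbin_pascal x k'
    have e : k' + 2 - 1 = k' + 1 := rfl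
    rw [e]
    have h1' : (ℬ₁.card : ℝ) + ((∂ ℬ₁).card : ℝ) ≤ ((∂ ℬ).card : ℝ) := by
      exact_mod_cast claimB
    have h2' : ((∂ ℬ).card : ℝ) ≤ ((∂ 𝒜).card : ℝ) := by exact_mod_cast hshad
    linarith

theorem stmt_5 (k : ℕ) (hk : 1 ≤ k) (t : ℝ) (ht : 1 ≤ t)
    (A : Finset (Finset (Fin (2 * k)))) (hA : ∀ s ∈ A, s.card = k)
    (hcard : (A.card : ℝ) = (∏ i ∈ Finset.range k, ((2 * k : ℝ) - t - i)) / (k.factorial)) :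
    ((t - 1) / ((k : ℝ) - t + 1)) * A.card + A.card ≤ (A.upShadow.card : ℝ) := by
  set x : ℝ := 2 * (k : ℝ) - t with hxdef
  set D : ℝ := (k : ℝ) - t + 1 with hDdef
  have hrb : (A.card : ℝ) = rbin x k := by
    rw [hcard, rbin]
  have hc0 : (0 : ℝ) ≤ (A.card : ℝ) := Nat.cast_nonneg _
  have hup0 : (0 : ℝ) ≤ (A.upShadow.card : ℝ) := Nat.cast_nonneg _
  have hk0 : (0 : ℝ) ≤ (k : ℝ) := Nat.cast_nonneg _
  rcases lt_trichotomy D 0 with hD | hD | hD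
  · -- D < 0 : LHS is nonpositive
    have hdiv : (t - 1) / D ≤ -1 := by
      rw [div_le_iff_of_neg hD]
      simp only [hDdef]
      linarith
    have := mul_le_mul_of_nonneg_right hdiv hc0
    linarith
  · -- D = 0 : |A| = 0
    have hAc : (A.card : ℝ) = 0 := by
      rw [hrb, rbin]
      have hkm : k - 1 ∈ Finset.range k := Finset.mem_range.mpr (by omega)
      rw [Finset.prod_eq_zero hkm]
      · simp
      · have hcast : ((k - 1 : ℕ) : ℝ) = (k : ℝ) - 1 := by
          push_cast [hk]
          ring
        rw [hcast, hxdef]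
        linarith [hD]
    rw [hAc]
    simpa using hup0
  · -- D > 0
    have hx1 : (k : ℝ) - 1 < x := by
      simp only [hxdef, hDdef] at *
      linarith
    rcases lt_or_ge x (k : ℝ) with hxk | hxk
    · -- impossible: 0 < |A| = rbin x k < 1
      exfalso
      have hfac : ∀ i ∈ Finset.range k, (0 : ℝ) < x - i := by
        intro i hi
        rw [Finset.mem_range] at hi
        have : (i : ℝ) + 1 ≤ k := by exact_mod_cast hi
        linarith
      have hpos : (0 : ℝ) < rbin x k := by
        rw [rbin]
        apply div_pos (Finset.prod_pos hfac) (by positivity)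
      have hlt1 : rbin x k < 1 := by
        have hprodlt : (∏ i ∈ Finset.range k, (x - i)) <
            (∏ i ∈ Finset.range k, ((k : ℝ) - i)) := by
          apply Finset.prod_lt_prod_of_nonempty hfac
          · intro i hi
            linarith [hxk]
          · exact Finset.nonempty_range_iff.mpr (by omega)
        have hk1 := rbin_self k
        rw [rbin] at hk1 ⊢
        rw [← hk1]
        exact div_lt_div_of_pos_right hprodlt (by positivity)
      have h1A : (1 : ℝ) ≤ (A.card : ℝ) := by
        have : 0 < A.card := by
          by_contra h
          push_neg at h
          have : A.card = 0 := by omega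
          rw [this] at hrb
          simp at hrb
          linarith [hrb ▸ hpos]
        exact_mod_cast this
      linarith [hrb ▸ h1A, hrb ▸ hlt1]
    · -- main case
      have hsized : ∀ s ∈ A.compls, s.card = k := by
        intro s hs
        rw [Finset.mem_compls] at hs
        have := hA _ hs
        have hcc : sᶜ.card = Fintype.card (Fin (2 * k)) - s.card := Finset.card_compl s
        rw [Fintype.card_fin] at hcc
        have hsle : s.card ≤ 2 * k := by
          have := Finset.card_le_univ s
          simpa [Fintype.card_fin] using this
        omega
      have hcompls_card : A.compls.card = A.card := Finset.card_compls A
      have hmain := lovasz_shadow k hk A.compls.card (2 * k) A.compls rfl hsized x hxk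
        (by rw [hcompls_card, ← hrb])
      have hmain2 : rbin x (k - 1) ≤ ((Finset.shadow A.compls).card : ℝ) := by
        convert hmain using 4
      have hbridge : (Finset.shadow A.compls).card = A.upShadow.card := by
        rw [Finset.shadow_compls, Finset.card_compls]
      rw [hbridge] at hmain2
      clear hmain
      rename' hmain2 => hmain
      -- identity : rbin x (k-1) = |A| * k / D
      obtain ⟨k1, rfl⟩ : ∃ k1, k = k1 + 1 := ⟨k - 1, by omega⟩
      have hkk : rbin x (k1 + 1) = rbin x k1 * (x - k1) / (k1 + 1) := rbin_succ_eq x k1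
      have hxk1 : x - (k1 : ℝ) = D := by
        simp only [hxdef, hDdef]
        push_cast
        ring
      have e : k1 + 1 - 1 = k1 := rfl
      rw [e] at hmain
      have hDne : D ≠ 0 := ne_of_gt hD
      have hkne : ((k1 : ℝ) + 1) ≠ 0 := by positivity
      -- rbin x k1 = |A| * (k1+1) / D
      have hval : rbin x k1 = (A.card : ℝ) * ((k1 : ℝ) + 1) / D := by
        rw [hrb, hkk, hxk1]
        field_simp
      rw [hval] at hmain
      have hLHS : ((t - 1) / D) * (A.card : ℝ) + (A.card : ℝ)
          = (A.card : ℝ) * ((k1 : ℝ) + 1) / D := by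
        rw [eq_div_iff hDne, add_mul, div_mul_eq_mul_div, div_mul_cancel₀ _ hDne]
        push_cast [hDdef]
        ring
      push_cast at hLHS ⊢
      rw [hLHS]
      exact hmain
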